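/- Let d ∈ ℤ and let h, g : ℤ → ℂ be finitely supported sequences. Suppose that for every ω ∈ (0, 2π), ∑_{k∈ℤ} g[k] e^{-ikω} = e^{-i(π/2 − (d + 1/2)ω)} · ∑_{k∈ℤ} h[k] e^{-ikω}. Then h[k] = 0 and g[k] = 0 for all k ∈ ℤ. -/

import Mathlib

open Real

-- coefficient extraction
lemma coeff_zero (s : Finset ℤ) (f : ℤ → ℂ)
    (hz : ∀ ω : ℝ, ∑ k ∈ s, f k * Complex.exp (-((k : ℂ) * ω) * Complex.I) = 0) :
    ∀ m ∈ s, f m = 0 := by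
  intro m hm
  have key : (∫ x in (0:ℝ)..(2*π), ∑ k ∈ s,
      f k * Complex.exp ((((m - k : ℤ) : ℂ) * Complex.I) * x)) = 0 := by
    have : ∀ x : ℝ, (∑ k ∈ s, f k * Complex.exp ((((m - k : ℤ) : ℂ) * Complex.I) * x))
        = (∑ k ∈ s, f k * Complex.exp (-((k : ℂ) * x) * Complex.I)) *
          Complex.exp (((m : ℂ) * Complex.I) * x) := by
      intro x
      rw [Finset.sum_mul]
      refine Finset.sum_congr rfl fun k _ => ?_
      rw [mul_assoc (f k), ← Complex.exp_add]
      congr 2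
      push_cast
      ring
    simp only [this, hz, zero_mul, intervalIntegral.integral_zero]
  rw [intervalIntegral.integral_finset_sum] at key
  · have eval : ∀ k ∈ s, (∫ x in (0:ℝ)..(2*π),
        f k * Complex.exp ((((m - k : ℤ) : ℂ) * Complex.I) * x))
        = if k = m then f m * (2*π) else 0 := by
      intro k _
      rw [intervalIntegral.integral_const_mul]
      by_cases hk : k = m
      · simp [hk]
      · have hc : (((m - k : ℤ) : ℂ) * Complex.I) ≠ 0 := by
          simp only [ne_eq, mul_eq_zero, Complex.I_ne_zero, or_false]
          exact_mod_cast sub_ne_zero.mpr (fun e => hk e.symm)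
        rw [if_neg hk, integral_exp_mul_complex hc]
        have h1 : Complex.exp ((((m - k : ℤ) : ℂ) * Complex.I) * ((2*π : ℝ) : ℂ)) = 1 := by
          rw [← Complex.exp_int_mul_two_pi_mul_I (m - k)]
          congr 1
          push_cast
          ring
        rw [h1]
        simp
    rw [Finset.sum_congr rfl eval, Finset.sum_ite_eq' s m (fun _ => f m * (2*π)),
      if_pos hm] at key
    have h2π : (2*π : ℂ) ≠ 0 := by
      simp only [ne_eq, mul_eq_zero, OfNat.ofNat_ne_zero, false_or]
      exact_mod_cast Real.pi_ne_zero
    exact (mul_eq_zero.mp key).resolve_right (by exact_mod_cast h2π)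
  · intro k _
    exact Continuous.intervalIntegrable (by fun_prop) _ _

theorem stmt_7 (d : ℤ) (h g : ℤ → ℂ)
    (hh : Set.Finite (Function.support h)) (hg : Set.Finite (Function.support g))
    (hrel : ∀ ω : ℝ, 0 < ω → ω < 2 * π →
      (∑' k : ℤ, g k * Complex.exp (-(((k : ℝ) * ω : ℝ) : ℂ) * Complex.I))
        = Complex.exp (-((π / 2 - ((d : ℝ) + 1 / 2) * ω : ℝ) : ℂ) * Complex.I) *
          ∑' k : ℤ, h k * Complex.exp (-(((k : ℝ) * ω : ℝ) : ℂ) * Complex.I)) :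
    ∀ k : ℤ, h k = 0 ∧ g k = 0 := by
  classical
  set s : Finset ℤ := hh.toFinset ∪ hg.toFinset with hs
  have hmemh : ∀ k, k ∉ s → h k = 0 := by
    intro k hk
    by_contra hne
    exact hk (Finset.mem_union_left _ (hh.mem_toFinset.mpr hne))
  have hmemg : ∀ k, k ∉ s → g k = 0 := by
    intro k hk
    by_contra hne
    exact hk (Finset.mem_union_right _ (hg.mem_toFinset.mpr hne))
  set Hc : ℂ → ℂ := fun z => ∑ k ∈ s, h k * Complex.exp (-((k : ℂ) * z) * Complex.I) with hHc
  set Gc : ℂ → ℂ := fun z => ∑ k ∈ s, g k * Complex.exp (-((k : ℂ) * z) * Complex.I) with hGc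
  set c : ℂ → ℂ := fun z =>
    Complex.exp (-((π : ℂ) / 2 - ((d : ℂ) + 1 / 2) * z) * Complex.I) with hc
  set A : ℂ → ℂ := fun z => Gc z - c z * Hc z with hA
  -- tsum hypothesis becomes finite sums
  have hts : ∀ (f : ℤ → ℂ), (∀ k, k ∉ s → f k = 0) → ∀ ω : ℝ,
      (∑' k : ℤ, f k * Complex.exp (-(((k : ℝ) * ω : ℝ) : ℂ) * Complex.I))
        = ∑ k ∈ s, f k * Complex.exp (-((k : ℂ) * (ω : ℂ)) * Complex.I) := by
    intro f hf ω
    rw [tsum_eq_sum (s := s) (fun k hk => by rw [hf k hk, zero_mul])]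
    refine Finset.sum_congr rfl fun k _ => ?_
    norm_cast
  have hA0 : ∀ ω : ℝ, 0 < ω → ω < 2 * π → A (ω : ℂ) = 0 := by
    intro ω h1 h2
    have hr := hrel ω h1 h2
    rw [hts g hmemg ω, hts h hmemh ω] at hr
    have hph : (-((π / 2 - ((d : ℝ) + 1 / 2) * ω : ℝ) : ℂ) * Complex.I)
        = -((π : ℂ) / 2 - ((d : ℂ) + 1 / 2) * (ω : ℂ)) * Complex.I := by
      push_cast; ring
    rw [hph] at hr
    simp only [hA, hGc, hHc, hc]
    rw [hr]
    ring
  -- A is entire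
  have hdiff : Differentiable ℂ A := by
    apply Differentiable.sub
    · exact Differentiable.fun_sum fun k _ => (differentiable_const _).mul (by fun_prop)
    · exact Differentiable.mul (by fun_prop)
        (Differentiable.fun_sum fun k _ => (differentiable_const _).mul (by fun_prop))
  have hAnal : AnalyticOnNhd ℂ A Set.univ :=
    (Complex.analyticOnNhd_univ_iff_differentiable).mpr hdiff
  -- identity theorem
  have hAzero : ∀ z : ℂ, A z = 0 := by
    have hfreq : ∃ᶠ z in nhdsWithin ((π : ℝ) : ℂ) {((π : ℝ) : ℂ)}ᶜ, A z = 0 := by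
      have htend0 : Filter.Tendsto (fun n : ℕ => (π + 1 / (n + 1) : ℝ)) Filter.atTop (nhds π) := by
        have := tendsto_one_div_add_atTop_nhds_zero_nat (𝕜 := ℝ)
        simpa using (tendsto_const_nhds (x := π) (f := Filter.atTop)).add this
      have htend : Filter.Tendsto (fun n : ℕ => ((π + 1 / (n + 1) : ℝ) : ℂ)) Filter.atTop
          (nhdsWithin ((π : ℝ) : ℂ) {((π : ℝ) : ℂ)}ᶜ) := by
        apply tendsto_nhdsWithin_of_tendsto_nhds_of_eventually_within
        · exact (Complex.continuous_ofReal.tendsto π).comp htend0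
        · refine Filter.Eventually.of_forall fun n => ?_
          simp only [Set.mem_compl_iff, Set.mem_singleton_iff]
          intro hcontra
          have : (π + 1 / (n + 1) : ℝ) = π := by exact_mod_cast hcontra
          have hpos : (0 : ℝ) < 1 / (n + 1) := by positivity
          linarith
      refine htend.frequently (Filter.Frequently.of_forall fun n => ?_)
      have hpos : (0 : ℝ) < 1 / (n + 1 : ℝ) := by positivity
      have hle : (1 : ℝ) / (n + 1) ≤ 1 := by
        rw [div_le_one (by positivity)]; linarith [Nat.cast_nonneg (α := ℝ) n]
      exact hA0 _ (by positivity) (by nlinarith [Real.pi_gt_three])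
    have := hAnal.eqOn_zero_of_preconnected_of_frequently_eq_zero isPreconnected_univ
      (Set.mem_univ _) hfreq
    exact fun z => this (Set.mem_univ z)
  -- periodicity and phase flip
  set τ : ℂ := ((2 * π : ℝ) : ℂ) with hτ
  have hper : ∀ (f : ℤ → ℂ) (z : ℂ),
      (∑ k ∈ s, f k * Complex.exp (-((k : ℂ) * (z + τ)) * Complex.I))
        = ∑ k ∈ s, f k * Complex.exp (-((k : ℂ) * z) * Complex.I) := by
    intro f z
    refine Finset.sum_congr rfl fun k _ => ?_
    have e : -((k : ℂ) * (z + τ)) * Complex.I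
        = -((k : ℂ) * z) * Complex.I + ((-k : ℤ) : ℂ) * (2 * (π : ℂ) * Complex.I) := by
      rw [hτ]; push_cast; ring
    rw [e, Complex.exp_add, Complex.exp_int_mul_two_pi_mul_I, mul_one]
  have hcflip : ∀ z : ℂ, c (z + τ) = - c z := by
    intro z
    simp only [hc]
    have e : -((π : ℂ) / 2 - ((d : ℂ) + 1 / 2) * (z + τ)) * Complex.I
        = -((π : ℂ) / 2 - ((d : ℂ) + 1 / 2) * z) * Complex.I
          + ((2 * d + 1 : ℤ) : ℂ) * ((π : ℂ) * Complex.I) := by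
      rw [hτ]; push_cast; ring
    rw [e, Complex.exp_add, Complex.exp_int_mul, Complex.exp_pi_mul_I,
      Odd.neg_one_zpow ⟨d, by ring⟩, mul_neg_one]
  have hH0 : ∀ z : ℂ, Hc z = 0 := by
    intro z
    have e1 : Gc z = c z * Hc z := sub_eq_zero.mp (hAzero z)
    have e2 : Gc z = - (c z * Hc z) := by
      have h3 := sub_eq_zero.mp (hAzero (z + τ))
      have hGper : Gc (z + τ) = Gc z := hper g z
      have hHper : Hc (z + τ) = Hc z := hper h z
      rw [hGper, hHper, hcflip] at h3
      rw [h3]; ring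
    have hzero : c z * Hc z = 0 := by
      have h4 := e1.symm.trans e2
      linear_combination h4 / 2
    exact (mul_eq_zero.mp hzero).resolve_left (Complex.exp_ne_zero _)
  have hG0 : ∀ z : ℂ, Gc z = 0 := by
    intro z
    rw [sub_eq_zero.mp (hAzero z), hH0, mul_zero]
  intro k
  constructor
  · by_cases hk : k ∈ s
    · exact coeff_zero s h (fun ω => hH0 (ω : ℂ)) k hk
    · exact hmemh k hk
  · by_cases hk : k ∈ s
    · exact coeff_zero s g (fun ω => hG0 (ω : ℂ)) k hk
    · exact hmemg k hk
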